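/- Let Q : Matrix (Fin n) (Fin n) ℝ be symmetric and β : Fin n → ℝ, and set g x := x ⬝ᵥ Q.mulVec x + 2 * (β ⬝ᵥ x). Then g is bounded below (BddBelow (Set.range g)) if and only if Q.PosSemidef and β lies in the range of Q.mulVec. In particular, if Q has a direction of negative curvature (some x with x ⬝ᵥ Q.mulVec x < 0), or if Q is positive semidefinite but the equation Q.mulVec x = -β has no solution, then g is unbounded below. -/

import Mathlib

open Matrix

lemma key_orth (n : ℕ) (Q : Matrix (Fin n) (Fin n) ℝ) (hQ : Qᵀ = Q) (β : Fin n → ℝ)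
    (hβ : β ∉ Set.range Q.mulVec) : ∃ v, Q.mulVec v = 0 ∧ β ⬝ᵥ v ≠ 0 := by
  let W : Submodule ℝ (EuclideanSpace ℝ (Fin n)) := LinearMap.range ((WithLp.linearEquiv 2 ℝ (Fin n → ℝ)).symm.toLinearMap ∘ₗ Q.mulVecLin)
  have hWW : Wᗮᗮ = W := Submodule.orthogonal_orthogonal W
  have hβW : ((WithLp.equiv 2 _).symm β : EuclideanSpace ℝ (Fin n)) ∉ Wᗮᗮ := by
    rw [hWW]
    intro h
    obtain ⟨x, hx⟩ := h
    exact hβ ⟨x, congrArg WithLp.ofLp hx⟩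
  rw [Submodule.mem_orthogonal] at hβW
  push_neg at hβW
  obtain ⟨v, hvW, hvβ⟩ := hβW
  have hinner : ∀ a b : Fin n → ℝ,
      (inner ℝ ((WithLp.equiv 2 _).symm a) ((WithLp.equiv 2 _).symm b) : ℝ) = a ⬝ᵥ b := by
    intro a b
    change dotProduct b (star a) = _
    rw [star_trivial, dotProduct_comm]
  set w : Fin n → ℝ := WithLp.equiv 2 _ v with hw
  have hveq : v = (WithLp.equiv 2 _).symm w := rfl
  have hQw : ∀ x : Fin n → ℝ, (Q *ᵥ x) ⬝ᵥ w = 0 := by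
    intro x
    have := hvW ((WithLp.equiv 2 _).symm (Q *ᵥ x)) ⟨x, rfl⟩
    rwa [hveq, hinner] at this
  have hQw0 : Q *ᵥ w = 0 := by
    have h1 : ∀ x : Fin n → ℝ, x ⬝ᵥ (Q *ᵥ w) = 0 := by
      intro x
      have := hQw x
      rw [Matrix.dotProduct_mulVec, show x ᵥ* Q = Q *ᵥ x from by
        rw [← hQ, Matrix.vecMul_transpose, hQ]]
      exact hQw x
    have := h1 (Q *ᵥ w)
    exact dotProduct_self_eq_zero.mp this
  refine ⟨w, hQw0, ?_⟩
  intro h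
  apply hvβ
  rw [hveq, hinner, dotProduct_comm]
  exact h

theorem quadratic_bddBelow_iff (n : ℕ)
    (Q : Matrix (Fin n) (Fin n) ℝ) (hQsymm : Qᵀ = Q)
    (β : Fin n → ℝ)
    (g : (Fin n → ℝ) → ℝ)
    (hg : ∀ x, g x = x ⬝ᵥ Q.mulVec x + 2 * (β ⬝ᵥ x)) :
    (BddBelow (Set.range g) ↔ Q.PosSemidef ∧ β ∈ Set.range Q.mulVec) ∧
    ((∃ x : Fin n → ℝ, x ⬝ᵥ Q.mulVec x < 0) → ¬ BddBelow (Set.range g)) ∧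
    ((Q.PosSemidef ∧ ¬ ∃ x : Fin n → ℝ, Q.mulVec x = -β) → ¬ BddBelow (Set.range g)) := by
  have hsym : ∀ a b : Fin n → ℝ, a ⬝ᵥ Q *ᵥ b = b ⬝ᵥ Q *ᵥ a := by
    intro a b
    rw [Matrix.dotProduct_mulVec, show a ᵥ* Q = Q *ᵥ a from by
      rw [← hQsymm, Matrix.vecMul_transpose, hQsymm], dotProduct_comm]
  have hgval : ∀ (t : ℝ) (v : Fin n → ℝ),
      g (t • v) = t ^ 2 * (v ⬝ᵥ Q *ᵥ v) + t * (2 * (β ⬝ᵥ v)) := by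
    intro t v
    rw [hg, Matrix.mulVec_smul, dotProduct_smul, smul_dotProduct,
      dotProduct_smul]
    simp only [smul_eq_mul]
    ring
  have unb1 : (∃ x : Fin n → ℝ, x ⬝ᵥ Q.mulVec x < 0) → ¬ BddBelow (Set.range g) := by
    rintro ⟨x, hx⟩ ⟨m, hm⟩
    set c := x ⬝ᵥ Q *ᵥ x with hc
    set b := 2 * (β ⬝ᵥ x) with hb
    set t := max 1 ((|m| + |b| + 1) / (-c)) with ht
    have ht1 : (1:ℝ) ≤ t := le_max_left _ _
    have ht2 : (|m| + |b| + 1) / (-c) ≤ t := le_max_right _ _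
    have hcneg : (0:ℝ) < -c := by linarith
    have htc : |m| + |b| + 1 ≤ t * (-c) := by
      rw [div_le_iff₀ hcneg] at ht2; linarith
    have hge : m ≤ g (t • x) := hm (Set.mem_range_self _)
    rw [hgval] at hge
    nlinarith [abs_nonneg m, abs_nonneg b, le_abs_self b, neg_abs_le b,
      le_abs_self m, neg_abs_le m]
  have unb2 : β ∉ Set.range Q.mulVec → ¬ BddBelow (Set.range g) := by
    rintro hβ ⟨m, hm⟩
    obtain ⟨v, hv0, hvb⟩ := key_orth n Q hQsymm β hβ
    set b := β ⬝ᵥ v with hb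
    set t := -(|m| + 1) / (2 * b) with ht
    have hge : m ≤ g (t • v) := hm (Set.mem_range_self _)
    rw [hgval, hv0] at hge
    simp only [dotProduct_zero, mul_zero, zero_add] at hge
    have hteq : t * (2 * b) = -(|m| + 1) := by
      rw [ht, dotProduct_comm] at *
      field_simp
    rw [hteq] at hge
    have := neg_abs_le m
    linarith
  have hpsd : BddBelow (Set.range g) → Q.PosSemidef := by
    intro hbdd
    rw [Matrix.posSemidef_iff_dotProduct_mulVec]
    constructor
    · show Qᴴ = Q
      simpa using hQsymm
    · intro x
      by_contra h
      push_neg at h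
      apply unb1 ?_ hbdd
      refine ⟨x, ?_⟩
      simpa using h
  refine ⟨⟨?_, ?_⟩, unb1, ?_⟩
  · intro hbdd
    refine ⟨hpsd hbdd, ?_⟩
    by_contra h
    exact unb2 h hbdd
  · rintro ⟨hQpsd, y, hy⟩
    refine ⟨-(y ⬝ᵥ Q *ᵥ y), ?_⟩
    rintro z ⟨x, rfl⟩
    rw [hg]
    have hexp : (x + y) ⬝ᵥ Q *ᵥ (x + y)
        = x ⬝ᵥ Q *ᵥ x + 2 * (β ⬝ᵥ x) + y ⬝ᵥ Q *ᵥ y := by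
      rw [Matrix.mulVec_add, add_dotProduct, dotProduct_add,
        dotProduct_add]
      have h1 : y ⬝ᵥ Q *ᵥ x = x ⬝ᵥ Q *ᵥ y := hsym y x
      have h2 : β ⬝ᵥ x = x ⬝ᵥ Q *ᵥ y := by
        rw [← hy, dotProduct_comm]
      linarith
    have h0 : 0 ≤ (x + y) ⬝ᵥ Q *ᵥ (x + y) := by
      have := hQpsd.dotProduct_mulVec_nonneg (x + y)
      simpa using this
    linarith
  · rintro ⟨hQpsd, hno⟩
    apply unb2
    rintro ⟨x, hx⟩
    exact hno ⟨-x, by rw [Matrix.mulVec_neg, hx]⟩
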